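/- Let r ≥ 1, let p₀, …, p_r be real polynomials with p_r(n) ≠ 0 for every natural number n, and let f : ℕ → ℝ satisfy p₀(n)f(n) + p₁(n)f(n+1) + ⋯ + p_r(n)f(n+r) = 0 for all n ∈ ℕ. Suppose there exist a real number μ ≥ 0 and a natural number n₀ such that: (i) f(k) ≥ 0 for all k ≤ n₀; (ii) f(n₀+i+1) ≥ μ·f(n₀+i) for all i with 0 ≤ i ≤ r−2; and (iii) for every natural number n ≥ n₀ and all real numbers y₀, …, y_{r−1} with y₀ ≥ 0 and y_{i+1} ≥ μ·y_i for 0 ≤ i ≤ r−2, one has −(p₀(n)/p_r(n))·y₀ − (p₁(n)/p_r(n))·y₁ − ⋯ − (p_{r−1}(n)/p_r(n))·y_{r−1} ≥ μ·y_{r−1}. Then f(n) ≥ 0 for all n ∈ ℕ. -/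

import Mathlib

open Polynomial Finset

theorem stmt_1 (r : ℕ) (hr : 1 ≤ r) (p : ℕ → Polynomial ℝ)
    (hpr : ∀ n : ℕ, (p r).eval (n : ℝ) ≠ 0)
    (f : ℕ → ℝ)
    (hrec : ∀ n : ℕ, ∑ i ∈ Finset.range (r + 1), (p i).eval (n : ℝ) * f (n + i) = 0)
    (μ : ℝ) (hμ : μ ≥ 0) (n₀ : ℕ)
    (hinit : ∀ k : ℕ, k ≤ n₀ → f k ≥ 0)
    (hstep : ∀ i : ℕ, i + 1 < r → f (n₀ + i + 1) ≥ μ * f (n₀ + i))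
    (hind : ∀ n : ℕ, n₀ ≤ n → ∀ y : ℕ → ℝ,
      y 0 ≥ 0 → (∀ i : ℕ, i + 1 < r → y (i + 1) ≥ μ * y i) →
      -∑ i ∈ Finset.range r, ((p i).eval (n : ℝ) / (p r).eval (n : ℝ)) * y i
        ≥ μ * y (r - 1)) :
    ∀ n : ℕ, f n ≥ 0 := by
  have key : ∀ m : ℕ, f (n₀ + m) ≥ 0 ∧ f (n₀ + m + 1) ≥ μ * f (n₀ + m) := by
    intro m
    induction m using Nat.strong_induction_on with
    | _ m ih =>
      have hnonneg : f (n₀ + m) ≥ 0 := by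
        rcases Nat.eq_zero_or_pos m with h0 | h0
        · subst h0; exact hinit n₀ (by simp)
        · obtain ⟨m', rfl⟩ := Nat.exists_eq_add_of_lt h0
          simp only [Nat.zero_add] at *
          have h1 := (ih m' (by omega)).2
          have h2 := (ih m' (by omega)).1
          have e : n₀ + (m' + 1) = n₀ + m' + 1 := by omega
          rw [e]
          nlinarith
      refine ⟨hnonneg, ?_⟩
      by_cases hm : m + 1 < r
      · exact hstep m hm
      · push_neg at hm
        set k := m + 1 - r with hk
        set n := n₀ + k with hn
        have hkm : k + r = m + 1 := by omega
        have hy0 : f (n + 0) ≥ 0 := by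
          rcases eq_or_lt_of_le (show k ≤ m by omega) with h | h
          · have : n + 0 = n₀ + m := by omega
            rw [this]; exact hnonneg
          · have : n + 0 = n₀ + k := by omega
            rw [this]; exact (ih k h).1
        have hchain : ∀ i : ℕ, i + 1 < r → f (n + (i + 1)) ≥ μ * f (n + i) := by
          intro i hi
          have e1 : n + (i + 1) = n₀ + (k + i) + 1 := by omega
          have e2 : n + i = n₀ + (k + i) := by omega
          rw [e1, e2]
          exact (ih (k + i) (by omega)).2
        have hmain := hind n (by omega) (fun i => f (n + i)) hy0 hchain
        have hpr' := hpr n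
        have hsum := hrec n
        rw [Finset.sum_range_succ] at hsum
        have heq : -∑ i ∈ Finset.range r,
            ((p i).eval (n : ℝ) / (p r).eval (n : ℝ)) * f (n + i) = f (n + r) := by
          have : ∑ i ∈ Finset.range r,
              ((p i).eval (n : ℝ) / (p r).eval (n : ℝ)) * f (n + i)
              = (∑ i ∈ Finset.range r, (p i).eval (n : ℝ) * f (n + i)) /
                (p r).eval (n : ℝ) := by
            rw [Finset.sum_div]
            exact Finset.sum_congr rfl (fun i _ => by ring)
          rw [this]
          have hS : ∑ i ∈ Finset.range r, (p i).eval (n : ℝ) * f (n + i)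
              = -((p r).eval (n : ℝ) * f (n + r)) := by linarith
          rw [hS]
          field_simp
        rw [heq] at hmain
        have e3 : n + r = n₀ + m + 1 := by omega
        have e4 : n + (r - 1) = n₀ + m := by omega
        have hmain' : f (n + r) ≥ μ * f (n + (r - 1)) := hmain
        rw [e3, e4] at hmain'
        exact hmain'
  intro n
  rcases le_or_gt n n₀ with h | h
  · exact hinit n h
  · have : n = n₀ + (n - n₀) := by omega
    rw [this]
    exact (key (n - n₀)).1
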